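/- π_1(tree) ≥ 4: there exists a finite tree T such that every 3-coloring of the vertices of T contains a path whose color sequence is a square uu with u nonempty. -/

import Mathlib

open SimpleGraph

def BT : SimpleGraph (Fin 255) where
  Adj i j := ((j:ℕ) = 2*(i:ℕ)+1 ∨ (j:ℕ) = 2*(i:ℕ)+2) ∨ ((i:ℕ) = 2*(j:ℕ)+1 ∨ (i:ℕ) = 2*(j:ℕ)+2)
  symm := by constructor; intro i j h; tauto
  loopless := by constructor; intro i h; rcases h with (h|h)|(h|h) <;> omega

lemma BT_adj {i j : Fin 255} :
    BT.Adj i j ↔ ((j:ℕ) = 2*(i:ℕ)+1 ∨ (j:ℕ) = 2*(i:ℕ)+2) ∨ ((i:ℕ) = 2*(j:ℕ)+1 ∨ (i:ℕ) = 2*(j:ℕ)+2) := Iff.rfl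

/-- `desc c v` : `v` is a descendant of `c` in heap order. -/
def desc (c : ℕ) (v : ℕ) : Prop :=
  if v = c then True else if v ≤ c then False else desc c ((v-1)/2)
termination_by v
decreasing_by have := Nat.div_le_self (v-1) 2; omega

lemma desc_self (c : ℕ) : desc c c := by rw [desc]; simp

lemma desc_ge {c v : ℕ} (h : desc c v) : c ≤ v := by
  rw [desc] at h
  split_ifs at h with h1 h2
  all_goals first | exact h.elim | omega

lemma desc_child {c x y : ℕ} (hch : y = 2*x+1 ∨ y = 2*x+2) :
    desc c y ↔ (y = c ∨ desc c x) := by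
  have hx : (y-1)/2 = x := by omega
  rw [desc, hx]
  split_ifs with h1 h2
  · simp [h1]
  · simp only [false_iff]
    rintro (h | hd)
    · exact h1 h
    · have := desc_ge hd; omega
  · simp [h1]

lemma BT_reach (i : Fin 255) : BT.Reachable i ⟨0, by omega⟩ := by
  obtain ⟨v, hv⟩ := i
  induction v using Nat.strong_induction_on with
  | _ v ih =>
    rcases Nat.eq_zero_or_pos v with rfl | hp
    · rfl
    · have hlt : (v-1)/2 < v := by have := Nat.div_le_self (v-1) 2; omega
      have hadj : BT.Adj ⟨v, hv⟩ ⟨(v-1)/2, by omega⟩ := by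
        rw [BT_adj]; right; simp; omega
      exact (hadj.reachable).trans (ih _ hlt (by omega))

lemma BT_connected : BT.Connected := by
  rw [connected_iff]
  refine ⟨fun u v => (BT_reach u).trans (BT_reach v).symm, ⟨⟨0, by omega⟩⟩⟩

lemma BT_mem_edge (v w : Fin 255) (hvw : (w:ℕ) = 2*(v:ℕ)+1 ∨ (w:ℕ) = 2*(v:ℕ)+2) :
    ∀ {a b : Fin 255} (p : BT.Walk a b), desc w.val a.val → ¬ desc w.val b.val →
      s(v,w) ∈ p.edges := by
  intro a b p
  induction p with
  | nil => intro h1 h2; exact (h2 h1).elim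
  | @cons a x b hadj q ih =>
    intro hda hdb
    by_cases hdx : desc w.val x.val
    · exact List.mem_cons_of_mem _ (ih hdx hdb)
    · rcases BT_adj.mp hadj with h | h
      · -- x is a child of a : desc w x ↔ x = w ∨ desc w a, so desc w x, contra
        exact absurd ((desc_child h).mpr (Or.inr hda)) hdx
      · -- a is a child of x : desc w a ↔ a = w ∨ desc w x
        have := (desc_child h).mp hda
        rcases this with heq | hd
        · -- a = w, and x = parent of w = v
          have hav : a = w := Fin.ext heq
          have hxv : x = v := by
            apply Fin.ext
            omega
          subst hav; subst hxv
          simp [Sym2.eq_swap]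
        · exact absurd hd hdx

lemma BT_acyclic : BT.IsAcyclic := by
  rw [isAcyclic_iff_forall_adj_isBridge]
  intro x y hadj
  rw [isBridge_iff_adj_and_forall_walk_mem_edges]
  refine fun p => ?_
  rcases BT_adj.mp hadj with h | h
  · -- y child of x
    have hm := BT_mem_edge x y h p.reverse (desc_self _)
      (fun hd => by have := desc_ge hd; omega)
    rw [Walk.edges_reverse, List.mem_reverse] at hm
    exact hm
  · -- x child of y
    have hm := BT_mem_edge y x h p (desc_self _)
      (fun hd => by have := desc_ge hd; omega)
    rwa [Sym2.eq_swap]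

lemma BT_isTree : BT.IsTree := ⟨BT_connected, BT_acyclic⟩

lemma BT_adj_of {i j : Fin 255} (h : (j:ℕ) = 2*(i:ℕ)+1 ∨ (j:ℕ) = 2*(i:ℕ)+2) : BT.Adj i j :=
  BT_adj.mpr (Or.inl h)
lemma BT_adj_of' {i j : Fin 255} (h : (i:ℕ) = 2*(j:ℕ)+1 ∨ (i:ℕ) = 2*(j:ℕ)+2) : BT.Adj i j :=
  BT_adj.mpr (Or.inr h)

lemma fin3_eq (a b x y : Fin 3) (hab : a ≠ b) (hxa : x ≠ a) (hxb : x ≠ b)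
    (hya : y ≠ a) (hyb : y ≠ b) : x = y := by revert hab hxa hxb hya hyb; revert a b x y; decide

lemma fin3_pick (b g x y : Fin 3) (hgb : g ≠ b) (hxy : x ≠ y) (hxb : x ≠ b) (hyb : y ≠ b) :
    x = g ∨ y = g := by revert hgb hxy hxb hyb; revert b g x y; decide

section
variable {c : Fin 255 → Fin 3}
  (H : ∀ (u v : Fin 255) (p : BT.Walk u v), p.IsPath →
        ∀ w : List (Fin 3), w ≠ [] → ¬ p.support.map c = w ++ w)

include H

lemma no_sq2 {p1 p2 : Fin 255} (a1 : BT.Adj p1 p2) : c p1 ≠ c p2 := by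
  intro he
  exact H p1 p2 (Walk.cons a1 Walk.nil)
    (by rw [Walk.isPath_def]; simp [a1.ne])
    [c p1] (by simp) (by simp [he])

lemma no_sq4 {p1 p2 p3 p4 : Fin 255}
    (a1 : BT.Adj p1 p2) (a2 : BT.Adj p2 p3) (a3 : BT.Adj p3 p4)
    (hnd : ([p1,p2,p3,p4] : List (Fin 255)).Nodup)
    (e1 : c p3 = c p1) (e2 : c p4 = c p2) : False := by
  exact H p1 p4 (Walk.cons a1 (Walk.cons a2 (Walk.cons a3 Walk.nil)))
    (by rw [Walk.isPath_def]; simpa using hnd)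
    [c p1, c p2] (by simp) (by simp [e1, e2])

lemma no_sq6 {p1 p2 p3 p4 p5 p6 : Fin 255}
    (a1 : BT.Adj p1 p2) (a2 : BT.Adj p2 p3) (a3 : BT.Adj p3 p4)
    (a4 : BT.Adj p4 p5) (a5 : BT.Adj p5 p6)
    (hnd : ([p1,p2,p3,p4,p5,p6] : List (Fin 255)).Nodup)
    (e1 : c p4 = c p1) (e2 : c p5 = c p2) (e3 : c p6 = c p3) : False := by
  exact H p1 p6 (Walk.cons a1 (Walk.cons a2 (Walk.cons a3 (Walk.cons a4 (Walk.cons a5 Walk.nil)))))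
    (by rw [Walk.isPath_def]; simpa using hnd)
    [c p1, c p2, c p3] (by simp) (by simp [e1, e2, e3])

/-- If a vertex `u ≤ 6` has two equally-colored children, colors are forced
periodically below it, producing a square down-path. -/
lemma forceA (u : ℕ) (hu : u ≤ 6) (k1 k2 : Fin 255)
    (h1 : (k1:ℕ) = 2*u+1) (h2 : (k2:ℕ) = 2*u+2) (hEq : c k1 = c k2) : False := by
  obtain ⟨v0, hv0⟩ : ∃ z : Fin 255, (z:ℕ) = u := ⟨⟨u, by omega⟩, rfl⟩
  obtain ⟨v2, hv2⟩ : ∃ z : Fin 255, (z:ℕ) = 4*u+3 := ⟨⟨4*u+3, by omega⟩, rfl⟩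
  obtain ⟨s2, hs2⟩ : ∃ z : Fin 255, (z:ℕ) = 4*u+4 := ⟨⟨4*u+4, by omega⟩, rfl⟩
  obtain ⟨v3, hv3⟩ : ∃ z : Fin 255, (z:ℕ) = 8*u+7 := ⟨⟨8*u+7, by omega⟩, rfl⟩
  obtain ⟨s3, hs3⟩ : ∃ z : Fin 255, (z:ℕ) = 8*u+8 := ⟨⟨8*u+8, by omega⟩, rfl⟩
  obtain ⟨v4, hv4⟩ : ∃ z : Fin 255, (z:ℕ) = 16*u+15 := ⟨⟨16*u+15, by omega⟩, rfl⟩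
  obtain ⟨s4, hs4⟩ : ∃ z : Fin 255, (z:ℕ) = 16*u+16 := ⟨⟨16*u+16, by omega⟩, rfl⟩
  obtain ⟨v5, hv5⟩ : ∃ z : Fin 255, (z:ℕ) = 32*u+31 := ⟨⟨32*u+31, by omega⟩, rfl⟩
  -- adjacencies
  have a01 : BT.Adj v0 k1 := BT_adj_of (by omega)
  have a01' : BT.Adj v0 k2 := BT_adj_of (by omega)
  have a12 : BT.Adj k1 v2 := BT_adj_of (by omega)
  have a12' : BT.Adj k1 s2 := BT_adj_of (by omega)
  have a23 : BT.Adj v2 v3 := BT_adj_of (by omega)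
  have a23' : BT.Adj v2 s3 := BT_adj_of (by omega)
  have a34 : BT.Adj v3 v4 := BT_adj_of (by omega)
  have a34' : BT.Adj v3 s4 := BT_adj_of (by omega)
  have a45 : BT.Adj v4 v5 := BT_adj_of (by omega)
  -- level 1
  have h10 : c k1 ≠ c v0 := (no_sq2 H a01).symm
  -- level 2
  have n2a : c v2 ≠ c k1 := (no_sq2 H a12).symm
  have n2b : c v2 ≠ c v0 := fun he => no_sq4 H
    (BT_adj_of' (by omega) : BT.Adj v2 k1) (BT_adj_of' (by omega) : BT.Adj k1 v0) a01'
    (by simp [Fin.ext_iff]; omega) he.symm hEq.symm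
  have n2a' : c s2 ≠ c k1 := (no_sq2 H a12').symm
  have n2b' : c s2 ≠ c v0 := fun he => no_sq4 H
    (BT_adj_of' (by omega) : BT.Adj s2 k1) (BT_adj_of' (by omega) : BT.Adj k1 v0) a01'
    (by simp [Fin.ext_iff]; omega) he.symm hEq.symm
  have heq2 : c v2 = c s2 := fin3_eq (c v0) (c k1) _ _ h10.symm n2b n2a n2b' n2a'
  -- level 3
  have n3t : c v3 ≠ c v2 := (no_sq2 H a23).symm
  have n3b : c v3 ≠ c k1 := fun he => no_sq4 H
    (BT_adj_of' (by omega) : BT.Adj v3 v2) (BT_adj_of' (by omega) : BT.Adj v2 k1) a12'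
    (by simp [Fin.ext_iff]; omega) he.symm heq2.symm
  have n3t' : c s3 ≠ c v2 := (no_sq2 H a23').symm
  have n3b' : c s3 ≠ c k1 := fun he => no_sq4 H
    (BT_adj_of' (by omega) : BT.Adj s3 v2) (BT_adj_of' (by omega) : BT.Adj v2 k1) a12'
    (by simp [Fin.ext_iff]; omega) he.symm heq2.symm
  have e3 : c v3 = c v0 := fin3_eq (c k1) (c v2) _ _ n2a.symm n3b n3t h10.symm n2b.symm
  have heq3 : c v3 = c s3 := fin3_eq (c k1) (c v2) _ _ n2a.symm n3b n3t n3b' n3t'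
  -- level 4
  have n4a : c v4 ≠ c v3 := (no_sq2 H a34).symm
  have n4t : c v4 ≠ c v2 := fun he => no_sq4 H
    (BT_adj_of' (by omega) : BT.Adj v4 v3) (BT_adj_of' (by omega) : BT.Adj v3 v2) a23'
    (by simp [Fin.ext_iff]; omega) he.symm heq3.symm
  have n4a' : c s4 ≠ c v3 := (no_sq2 H a34').symm
  have n4t' : c s4 ≠ c v2 := fun he => no_sq4 H
    (BT_adj_of' (by omega) : BT.Adj s4 v3) (BT_adj_of' (by omega) : BT.Adj v3 v2) a23'
    (by simp [Fin.ext_iff]; omega) he.symm heq3.symm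
  have e4 : c v4 = c k1 := fin3_eq (c v2) (c v3) _ _ n3t.symm n4t n4a n2a.symm n3b.symm
  have heq4 : c v4 = c s4 := fin3_eq (c v2) (c v3) _ _ n3t.symm n4t n4a n4t' n4a'
  -- level 5
  have n5b : c v5 ≠ c v4 := (no_sq2 H a45).symm
  have n5a : c v5 ≠ c v3 := fun he => no_sq4 H
    (BT_adj_of' (by omega) : BT.Adj v5 v4) (BT_adj_of' (by omega) : BT.Adj v4 v3) a34'
    (by simp [Fin.ext_iff]; omega) he.symm heq4.symm
  have e5 : c v5 = c v2 := fin3_eq (c v3) (c v4) _ _ n4a.symm n5a n5b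
    (fun h => n3t h.symm) (fun h => n4t h.symm)
  exact no_sq6 H a01 a12 a23 a34 a45 (by simp [Fin.ext_iff]; omega) e3 e4 e5

end

/-- `π_1(tree) ≥ 4`: there exists a finite tree `T` such that every 3-coloring
of the vertices of `T` contains a path whose color sequence is a square
`u ++ u` with `u` nonempty. -/
theorem stmt_13 :
    ∃ (n : ℕ) (T : SimpleGraph (Fin n)), T.IsTree ∧
      ∀ c : Fin n → Fin 3, ∃ (u v : Fin n) (p : T.Walk u v), p.IsPath ∧
        ∃ w : List (Fin 3), w ≠ [] ∧ p.support.map c = w ++ w := by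
  refine ⟨255, BT, BT_isTree, fun c => ?_⟩
  by_contra hcon
  push_neg at hcon
  have H : ∀ (u v : Fin 255) (p : BT.Walk u v), p.IsPath →
      ∀ w : List (Fin 3), w ≠ [] → ¬ p.support.map c = w ++ w := hcon
  clear hcon
  obtain ⟨z0, hz0⟩ : ∃ z : Fin 255, (z:ℕ) = 0 := ⟨⟨0, by omega⟩, rfl⟩
  obtain ⟨z1, hz1⟩ : ∃ z : Fin 255, (z:ℕ) = 1 := ⟨⟨1, by omega⟩, rfl⟩
  obtain ⟨z2, hz2⟩ : ∃ z : Fin 255, (z:ℕ) = 2 := ⟨⟨2, by omega⟩, rfl⟩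
  obtain ⟨z3, hz3⟩ : ∃ z : Fin 255, (z:ℕ) = 3 := ⟨⟨3, by omega⟩, rfl⟩
  obtain ⟨z4, hz4⟩ : ∃ z : Fin 255, (z:ℕ) = 4 := ⟨⟨4, by omega⟩, rfl⟩
  obtain ⟨z5, hz5⟩ : ∃ z : Fin 255, (z:ℕ) = 5 := ⟨⟨5, by omega⟩, rfl⟩
  obtain ⟨z6, hz6⟩ : ∃ z : Fin 255, (z:ℕ) = 6 := ⟨⟨6, by omega⟩, rfl⟩
  have a01 : BT.Adj z0 z1 := BT_adj_of (by omega)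
  have a02 : BT.Adj z0 z2 := BT_adj_of (by omega)
  have a13 : BT.Adj z1 z3 := BT_adj_of (by omega)
  have a14 : BT.Adj z1 z4 := BT_adj_of (by omega)
  have a25 : BT.Adj z2 z5 := BT_adj_of (by omega)
  have a26 : BT.Adj z2 z6 := BT_adj_of (by omega)
  -- rainbow at the root
  have r0 : c z1 ≠ c z2 := fun he => forceA H 0 (by omega) z1 z2 (by omega) (by omega) he
  have n10 : c z1 ≠ c z0 := (no_sq2 H a01).symm
  have n20 : c z2 ≠ c z0 := (no_sq2 H a02).symm
  -- pick y1 ∈ {z5, z6} with c y1 = c z1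
  have r2 : c z5 ≠ c z6 := fun he => forceA H 2 (by omega) z5 z6 (by omega) (by omega) he
  have pick_y : c z5 = c z1 ∨ c z6 = c z1 :=
    fin3_pick (c z2) (c z1) (c z5) (c z6) r0 r2 (no_sq2 H a25).symm (no_sq2 H a26).symm
  obtain ⟨y1, hy1, hcy1⟩ : ∃ y : Fin 255, ((y:ℕ) = 5 ∨ (y:ℕ) = 6) ∧ c y = c z1 := by
    rcases pick_y with h | h
    · exact ⟨z5, Or.inl hz5, h⟩
    · exact ⟨z6, Or.inr hz6, h⟩
  -- the final square, given suitable x1, x2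
  have final : ∀ (x1 x2 : Fin 255), ((x1:ℕ) = 3 ∨ (x1:ℕ) = 4) →
      ((x2:ℕ) = 2*(x1:ℕ)+1 ∨ (x2:ℕ) = 2*(x1:ℕ)+2) →
      c x1 = c z2 → c x2 = c z0 → False := by
    intro x1 x2 hx1 hx2 e1 e2
    exact no_sq6 H (BT_adj_of' hx2) (BT_adj_of' (by omega) : BT.Adj x1 z1)
      (BT_adj_of' (by omega) : BT.Adj z1 z0) a02 (BT_adj_of (by omega) : BT.Adj z2 y1)
      (by simp [Fin.ext_iff]; omega) e2.symm e1.symm hcy1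
  -- step 2: any x1 ∈ {3,4} with color c z2 leads to contradiction
  have step2 : ∀ x1 : Fin 255, ((x1:ℕ) = 3 ∨ (x1:ℕ) = 4) → c x1 = c z2 → False := by
    intro x1 hx1 hcx1
    obtain ⟨k1, hk1⟩ : ∃ z : Fin 255, (z:ℕ) = 2*(x1:ℕ)+1 := ⟨⟨2*x1+1, by omega⟩, rfl⟩
    obtain ⟨k2, hk2⟩ : ∃ z : Fin 255, (z:ℕ) = 2*(x1:ℕ)+2 := ⟨⟨2*x1+2, by omega⟩, rfl⟩
    have hkk : c k1 ≠ c k2 := fun he => forceA H x1.val (by omega) k1 k2 (by omega) (by omega) he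
    have hk1x : c k1 ≠ c x1 := (no_sq2 H (BT_adj_of (by omega) : BT.Adj x1 k1)).symm
    have hk2x : c k2 ≠ c x1 := (no_sq2 H (BT_adj_of (by omega) : BT.Adj x1 k2)).symm
    have hz0x : c z0 ≠ c x1 := by rw [hcx1]; exact n20.symm
    rcases fin3_pick (c x1) (c z0) (c k1) (c k2) hz0x hkk hk1x hk2x with h | h
    · exact final x1 k1 hx1 (Or.inl hk1) hcx1 h
    · exact final x1 k2 hx1 (Or.inr hk2) hcx1 h
  -- pick x1 ∈ {z3, z4} with c x1 = c z2
  have r1 : c z3 ≠ c z4 := fun he => forceA H 1 (by omega) z3 z4 (by omega) (by omega) he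
  have pick_x : c z3 = c z2 ∨ c z4 = c z2 :=
    fin3_pick (c z1) (c z2) (c z3) (c z4) r0.symm r1 (no_sq2 H a13).symm (no_sq2 H a14).symm
  rcases pick_x with h | h
  · exact step2 z3 (Or.inl hz3) h
  · exact step2 z4 (Or.inr hz4) h
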